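/- Let ℓ ≥ 0, μ > 0 and C₀ > 0. Then there exists a constant C = C(ℓ, μ, C₀) > 0 such that for every continuously differentiable function φ : ℝ → ℝ² with |φ'(x)| ≤ C₀ e^{−μ|x|} for all x ∈ ℝ, and every τ ∈ ℝ with |τ| ≤ 1, one has ∫_ℝ (x²+1)^{ℓ} |φ(x − τ) − φ(x)|² dx ≤ C τ². -/

import Mathlib

open MeasureTheory

open Real Set in
private lemma integrable_exp_neg_mul_abs' {b : ℝ} (hb : 0 < b) :
    Integrable fun x : ℝ => Real.exp (-b * |x|) := by
  have hIoi : IntegrableOn (fun x : ℝ => Real.exp (-b * |x|)) (Ioi 0) := by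
    refine (exp_neg_integrableOn_Ioi 0 hb).congr_fun ?_ measurableSet_Ioi
    intro x hx
    simp [abs_of_pos (Set.mem_Ioi.1 hx)]
  rw [← integrableOn_univ, ← @Iio_union_Ici _ _ (0 : ℝ), integrableOn_union,
    integrableOn_Ici_iff_integrableOn_Ioi]
  refine ⟨?_, hIoi⟩
  rw [← (Measure.measurePreserving_neg (volume : Measure ℝ)).integrableOn_comp_preimage
      (Homeomorph.neg ℝ).measurableEmbedding]
  simp only [Function.comp_def, abs_neg, neg_preimage, neg_Iio, neg_zero]
  exact hIoi

open Real in
private lemma poly_le_exp (ℓ μ : ℝ) (hℓ : 0 ≤ ℓ) (hμ : 0 < μ) (x : ℝ) :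
    (x ^ 2 + 1) ^ ℓ ≤ (4 * (ℓ + 1) ^ 2 / μ ^ 2 + 1) ^ ℓ * Real.exp (μ * |x|) := by
  have hℓ1 : (0:ℝ) < ℓ + 1 := by linarith
  set t : ℝ := μ * |x| / (ℓ + 1) with ht
  have htnn : 0 ≤ t := by positivity
  -- exp t ≥ (1 + t/2)^2 ≥ t^2/4
  have hq : t ^ 2 / 4 ≤ Real.exp t := by
    have h1 : 1 + t / 2 ≤ Real.exp (t / 2) := by
      have := Real.add_one_le_exp (t / 2); linarith
    have h2 : (t / 2) ^ 2 ≤ (1 + t / 2) ^ 2 := by nlinarith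
    have h3 : (1 + t / 2) ^ 2 ≤ Real.exp (t / 2) ^ 2 := by
      apply pow_le_pow_left₀ (by positivity) h1
    have h4 : Real.exp (t / 2) ^ 2 = Real.exp t := by
      rw [pow_two, ← Real.exp_add]; congr 1; ring
    nlinarith
  -- x^2 + 1 ≤ (4(ℓ+1)^2/μ^2 + 1) * exp t
  have hx2 : x ^ 2 ≤ 4 * (ℓ + 1) ^ 2 / μ ^ 2 * Real.exp t := by
    have hxe : x ^ 2 = t ^ 2 * (ℓ + 1) ^ 2 / μ ^ 2 := by
      rw [ht]
      field_simp
      rw [sq_abs]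
    have h4 : t ^ 2 ≤ 4 * Real.exp t := by linarith
    calc x ^ 2 = t ^ 2 * ((ℓ + 1) ^ 2 / μ ^ 2) := by rw [hxe]; ring
      _ ≤ (4 * Real.exp t) * ((ℓ + 1) ^ 2 / μ ^ 2) :=
          mul_le_mul_of_nonneg_right h4 (by positivity)
      _ = 4 * (ℓ + 1) ^ 2 / μ ^ 2 * Real.exp t := by ring
  have hexp1 : (1:ℝ) ≤ Real.exp t := Real.one_le_exp htnn
  have hbase : x ^ 2 + 1 ≤ (4 * (ℓ + 1) ^ 2 / μ ^ 2 + 1) * Real.exp t := by nlinarith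
  calc (x ^ 2 + 1) ^ ℓ ≤ ((4 * (ℓ + 1) ^ 2 / μ ^ 2 + 1) * Real.exp t) ^ ℓ := by
        apply Real.rpow_le_rpow (by positivity) hbase hℓ
    _ = (4 * (ℓ + 1) ^ 2 / μ ^ 2 + 1) ^ ℓ * Real.exp t ^ ℓ := by
        rw [Real.mul_rpow (by positivity) (Real.exp_pos _).le]
    _ ≤ (4 * (ℓ + 1) ^ 2 / μ ^ 2 + 1) ^ ℓ * Real.exp (μ * |x|) := by
        apply mul_le_mul_of_nonneg_left _ (by positivity)
        rw [← Real.exp_mul]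
        apply Real.exp_le_exp.2
        rw [ht]
        rw [div_mul_eq_mul_div, mul_comm]
        rw [div_le_iff₀ hℓ1]
        have : 0 ≤ μ * |x| := by positivity
        nlinarith

/-- Shift estimate for exponentially localized profiles: if `|φ'(x)| ≤ C₀ e^{−μ|x|}`,
then `∫_ℝ (x²+1)^ℓ |φ(x−τ) − φ(x)|² dx ≤ C τ²` for all `|τ| ≤ 1`. -/
theorem stmt_19 (ℓ μ C₀ : ℝ) (hℓ : 0 ≤ ℓ) (hμ : 0 < μ) (hC₀ : 0 < C₀) :
    ∃ C : ℝ, 0 < C ∧ ∀ φ : ℝ → EuclideanSpace ℝ (Fin 2), ContDiff ℝ 1 φ →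
      (∀ x : ℝ, ‖deriv φ x‖ ≤ C₀ * Real.exp (-μ * |x|)) →
      ∀ τ : ℝ, |τ| ≤ 1 →
        (∫ x : ℝ, (x ^ 2 + 1) ^ ℓ * ‖φ (x - τ) - φ x‖ ^ 2) ≤ C * τ ^ 2 := by
  set B : ℝ := (4 * (ℓ + 1) ^ 2 / μ ^ 2 + 1) ^ ℓ with hB
  have hBpos : 0 < B := Real.rpow_pos_of_pos (by positivity) _
  set K : ℝ := ∫ x : ℝ, Real.exp (-μ * |x|) with hK
  have hKint : Integrable fun x : ℝ => Real.exp (-μ * |x|) := integrable_exp_neg_mul_abs' hμ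
  have hKnn : 0 ≤ K := integral_nonneg fun x => (Real.exp_pos _).le
  refine ⟨C₀ ^ 2 * Real.exp (2 * μ) * B * K + 1, by positivity, ?_⟩
  intro φ hφ hd τ hτ
  -- pointwise mean value bound
  have key : ∀ x : ℝ, ‖φ (x - τ) - φ x‖ ≤ C₀ * Real.exp (μ * (1 - |x|)) * |τ| := by
    intro x
    have hconv : Convex ℝ (Set.Icc (x - 1) (x + 1)) := convex_Icc _ _
    have hmem1 : x ∈ Set.Icc (x - 1) (x + 1) := by constructor <;> linarith
    have hmem2 : x - τ ∈ Set.Icc (x - 1) (x + 1) := by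
      have h1 := abs_le.1 hτ
      constructor <;> [linarith [h1.2]; linarith [h1.1]]
    have bound : ∀ t ∈ Set.Icc (x - 1) (x + 1), ‖deriv φ t‖ ≤ C₀ * Real.exp (μ * (1 - |x|)) := by
      intro t ht
      refine (hd t).trans ?_
      apply mul_le_mul_of_nonneg_left _ hC₀.le
      apply Real.exp_le_exp.2
      have habs : |x - t| ≤ 1 := by
        rw [abs_le]; constructor <;> [linarith [ht.2]; linarith [ht.1]]
      have : |x| ≤ |t| + 1 := by
        calc |x| = |t + (x - t)| := by ring_nf
          _ ≤ |t| + |x - t| := abs_add_le _ _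
          _ ≤ |t| + 1 := by linarith
      nlinarith [abs_nonneg t, abs_nonneg x]
    have := hconv.norm_image_sub_le_of_norm_deriv_le
      (fun t _ => (hφ.differentiable one_ne_zero).differentiableAt) bound hmem1 hmem2
    calc ‖φ (x - τ) - φ x‖ ≤ C₀ * Real.exp (μ * (1 - |x|)) * ‖x - τ - x‖ := this
      _ = C₀ * Real.exp (μ * (1 - |x|)) * |τ| := by
          rw [show x - τ - x = -τ by ring, norm_neg, Real.norm_eq_abs]
  -- dominating function
  have hdom : ∀ x : ℝ, (x ^ 2 + 1) ^ ℓ * ‖φ (x - τ) - φ x‖ ^ 2 ≤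
      C₀ ^ 2 * Real.exp (2 * μ) * B * τ ^ 2 * Real.exp (-μ * |x|) := by
    intro x
    have h1 := key x
    have hnn : (0:ℝ) ≤ (x ^ 2 + 1) ^ ℓ := by positivity
    have h2 : ‖φ (x - τ) - φ x‖ ^ 2 ≤ (C₀ * Real.exp (μ * (1 - |x|)) * |τ|) ^ 2 := by
      apply pow_le_pow_left₀ (norm_nonneg _) h1
    have h3 : (x ^ 2 + 1) ^ ℓ * ‖φ (x - τ) - φ x‖ ^ 2 ≤
        (x ^ 2 + 1) ^ ℓ * (C₀ * Real.exp (μ * (1 - |x|)) * |τ|) ^ 2 :=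
      mul_le_mul_of_nonneg_left h2 hnn
    refine h3.trans ?_
    have hpoly := poly_le_exp ℓ μ hℓ hμ x
    have e1 : Real.exp (μ * (1 - |x|)) ^ 2
        = Real.exp (2 * μ) * Real.exp (-2 * μ * |x|) := by
      rw [pow_two, ← Real.exp_add, ← Real.exp_add]; congr 1; ring
    have hexpand : (C₀ * Real.exp (μ * (1 - |x|)) * |τ|) ^ 2
        = C₀ ^ 2 * Real.exp (2 * μ) * τ ^ 2 * Real.exp (-2 * μ * |x|) := by
      rw [mul_pow, mul_pow, sq_abs, e1]; ring
    rw [hexpand]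
    have e2 : Real.exp (μ * |x|) * Real.exp (-2 * μ * |x|) = Real.exp (-μ * |x|) := by
      rw [← Real.exp_add]; congr 1; ring
    calc (x ^ 2 + 1) ^ ℓ * (C₀ ^ 2 * Real.exp (2 * μ) * τ ^ 2 * Real.exp (-2 * μ * |x|))
        ≤ B * Real.exp (μ * |x|) * (C₀ ^ 2 * Real.exp (2 * μ) * τ ^ 2 * Real.exp (-2 * μ * |x|)) := by
          apply mul_le_mul_of_nonneg_right hpoly (by positivity)
      _ = C₀ ^ 2 * Real.exp (2 * μ) * B * τ ^ 2 *
            (Real.exp (μ * |x|) * Real.exp (-2 * μ * |x|)) := by ring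
      _ = C₀ ^ 2 * Real.exp (2 * μ) * B * τ ^ 2 * Real.exp (-μ * |x|) := by rw [e2]
  -- conclusion via integral comparison
  have hgint : Integrable fun x : ℝ =>
      C₀ ^ 2 * Real.exp (2 * μ) * B * τ ^ 2 * Real.exp (-μ * |x|) := hKint.const_mul _
  have hfnn : ∀ x : ℝ, 0 ≤ (x ^ 2 + 1) ^ ℓ * ‖φ (x - τ) - φ x‖ ^ 2 := fun x => by positivity
  have hmono : (∫ x : ℝ, (x ^ 2 + 1) ^ ℓ * ‖φ (x - τ) - φ x‖ ^ 2)
      ≤ ∫ x : ℝ, C₀ ^ 2 * Real.exp (2 * μ) * B * τ ^ 2 * Real.exp (-μ * |x|) := by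
    apply integral_mono_of_nonneg (Filter.Eventually.of_forall hfnn) hgint
      (Filter.Eventually.of_forall hdom)
  have hval : (∫ x : ℝ, C₀ ^ 2 * Real.exp (2 * μ) * B * τ ^ 2 * Real.exp (-μ * |x|))
      = C₀ ^ 2 * Real.exp (2 * μ) * B * τ ^ 2 * K := by
    rw [integral_const_mul]
  refine hmono.trans ?_
  rw [hval]
  have : C₀ ^ 2 * Real.exp (2 * μ) * B * τ ^ 2 * K
      = (C₀ ^ 2 * Real.exp (2 * μ) * B * K) * τ ^ 2 := by ring
  rw [this]
  have hτsq : 0 ≤ τ ^ 2 := sq_nonneg τ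
  nlinarith [mul_nonneg (mul_nonneg (mul_nonneg (sq_nonneg C₀) (Real.exp_pos (2*μ)).le) hBpos.le) hKnn]
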